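/- Let G_1 and G_2 be connected simple graphs on n_1 and n_2 vertices with Laplacian eigenvalues 0 = λ_1(G_1) < λ_2(G_1) ≤ ... ≤ λ_{n_1}(G_1) and 0 = λ_1(G_2) < λ_2(G_2) ≤ ... ≤ λ_{n_2}(G_2), and let d_{G_1}(u_i) denote the degree of vertex u_i in G_1. Then the lexicographic product G_1[G_2] satisfies BH(G_1[G_2]) = n_1·n_2·(Σ_{i=2}^{n_1} 1/(n_2² λ_i(G_1)²) + Σ_{j=2}^{n_2} Σ_{i=1}^{n_1} 1/(λ_j(G_2) + d_{G_1}(u_i)·n_2)²). -/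

import Mathlib

open Finset Polynomial

/-- The eigenvalues of the Laplacian matrix of `G` over `ℝ`, as produced (in no
particular order) by the spectral theorem for symmetric matrices. -/
noncomputable def lapEigsUnordered {V : Type*} [Fintype V] [DecidableEq V]
    (G : SimpleGraph V) [DecidableRel G.Adj] : V → ℝ :=
  (SimpleGraph.posSemidef_lapMatrix (R := ℝ) (G := G)).1.eigenvalues

/-- `μ : Fin n → ℝ` lists the eigenvalues of the Laplacian matrix of `G`
in nondecreasing order (so, `0`-based, `μ ⟨0,_⟩ = λ₁ ≤ μ ⟨1,_⟩ = λ₂ ≤ ⋯`). -/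
def IsLapEigSeq {V : Type*} [Fintype V] [DecidableEq V] (G : SimpleGraph V)
    [DecidableRel G.Adj] {n : ℕ} (μ : Fin n → ℝ) : Prop :=
  Monotone μ ∧ ∃ e : V ≃ Fin n, ∀ v, lapEigsUnordered G v = μ (e v)

/-- The lexicographic product `G₁[G₂]`: vertices `(u₁, v₁)` and `(u₂, v₂)` are adjacent
iff `u₁ u₂ ∈ E(G₁)`, or `u₁ = u₂` and `v₁ v₂ ∈ E(G₂)`. -/
def lexProd {α β : Type*} (G₁ : SimpleGraph α) (G₂ : SimpleGraph β) :
    SimpleGraph (α × β) :=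
  SimpleGraph.fromRel (fun u v => G₁.Adj u.1 v.1 ∨ (u.1 = v.1 ∧ G₂.Adj u.2 v.2))

noncomputable instance {α β : Type*} (G₁ : SimpleGraph α) (G₂ : SimpleGraph β) :
    DecidableRel (lexProd G₁ G₂).Adj :=
  Classical.decRel _


open Matrix Kronecker

section general
variable {n : Type*} [Fintype n] [DecidableEq n]

lemma charpoly_eq_of_conj {M P : Matrix n n ℝ} (d : n → ℝ) (hP : IsUnit P.det)
    (h : M * P = P * Matrix.diagonal d) :
    M.charpoly = ∏ i, (X - C (d i)) := by
  have hcm : charmatrix (Matrix.diagonal d) = Matrix.diagonal (fun i => X - C (d i)) := by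
    ext i j
    by_cases hij : i = j
    · subst hij; simp
    · simp [Matrix.diagonal_apply_ne _ hij, charmatrix_apply]
  have key : charmatrix M * P.map C = P.map C * charmatrix (Matrix.diagonal d) := by
    have hscal : Matrix.scalar n (X : ℝ[X]) * P.map C = P.map C * Matrix.scalar n (X : ℝ[X]) := by
      rw [scalar_commute]
      intro r; exact Commute.all _ _
    have hmul : (M.map C) * (P.map C) = (P.map C) * ((Matrix.diagonal d).map C) := by
      rw [← Matrix.map_mul, ← Matrix.map_mul, h]
    calc charmatrix M * P.map C
        = Matrix.scalar n X * P.map C - M.map C * P.map C := by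
          rw [charmatrix, sub_mul]; rfl
      _ = P.map C * Matrix.scalar n X - P.map C * (Matrix.diagonal d).map C := by
          rw [hscal, hmul]
      _ = P.map C * charmatrix (Matrix.diagonal d) := by
          rw [charmatrix, mul_sub]; rfl
  have hdet : M.charpoly * (P.map C).det = (P.map C).det * ∏ i, (X - C (d i)) := by
    have hthis := congrArg Matrix.det key
    rw [Matrix.det_mul, Matrix.det_mul] at hthis
    calc M.charpoly * (P.map C).det = M.charmatrix.det * (P.map C).det := rfl
      _ = (P.map C).det * (Matrix.diagonal d).charmatrix.det := hthis
      _ = (P.map C).det * ∏ i, (X - C (d i)) := by rw [hcm, Matrix.det_diagonal]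
  have hdP : (P.map C).det = C P.det := by
    rw [← RingHom.mapMatrix_apply, ← RingHom.map_det]
  have hC : (C P.det : ℝ[X]) ≠ 0 := by
    simpa using hP.ne_zero
  rw [hdP] at hdet
  have := mul_comm (M.charpoly) (C P.det) ▸ hdet
  exact mul_left_cancel₀ hC this

lemma herm_mul_eigUnitary {A : Matrix n n ℝ} (hA : A.IsHermitian) :
    A * (hA.eigenvectorUnitary : Matrix n n ℝ) =
      (hA.eigenvectorUnitary : Matrix n n ℝ) * Matrix.diagonal hA.eigenvalues := by
  have h1 : (star (hA.eigenvectorUnitary : Matrix n n ℝ)) *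
      (hA.eigenvectorUnitary : Matrix n n ℝ) = 1 :=
    Matrix.mem_unitaryGroup_iff'.mp hA.eigenvectorUnitary.2
  have hdiag : Matrix.diagonal (RCLike.ofReal ∘ hA.eigenvalues) = Matrix.diagonal hA.eigenvalues := by
    rw [show (RCLike.ofReal ∘ hA.eigenvalues : n → ℝ) = hA.eigenvalues from funext fun i => by
      simp [RCLike.ofReal_real_eq_id]]
  calc A * (hA.eigenvectorUnitary : Matrix n n ℝ)
      = ((hA.eigenvectorUnitary : Matrix n n ℝ) * Matrix.diagonal (RCLike.ofReal ∘ hA.eigenvalues)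
          * star (hA.eigenvectorUnitary : Matrix n n ℝ)) * (hA.eigenvectorUnitary : Matrix n n ℝ) := by
        have hst := hA.spectral_theorem
        rw [Unitary.conjStarAlgAut_apply] at hst
        rw [← hst]
    _ = (hA.eigenvectorUnitary : Matrix n n ℝ) * Matrix.diagonal hA.eigenvalues := by
        rw [mul_assoc, h1, mul_one, hdiag]

lemma eig_multiset_eq {M P : Matrix n n ℝ} (hM : M.IsHermitian) (d : n → ℝ)
    (hP : IsUnit P.det) (h : M * P = P * Matrix.diagonal d) :
    Multiset.map hM.eigenvalues Finset.univ.val = Multiset.map d Finset.univ.val := by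
  have hU : IsUnit ((hM.eigenvectorUnitary : Matrix n n ℝ)).det :=
    Matrix.isUnit_det_of_left_inverse (Matrix.mem_unitaryGroup_iff'.mp hM.eigenvectorUnitary.2)
  have h1 := charpoly_eq_of_conj _ hU (herm_mul_eigUnitary hM)
  have h2 := charpoly_eq_of_conj _ hP h
  have h3 : (∏ i, (X - C (hM.eigenvalues i)) : ℝ[X]) = ∏ i, (X - C (d i)) := h1 ▸ h2
  have hroots : ∀ (a : n → ℝ), (∏ i, (X - C (a i)) : ℝ[X]).roots = Multiset.map a Finset.univ.val := by
    intro a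
    rw [Finset.prod_eq_multiset_prod]
    rw [show Multiset.map (fun i => X - C (a i)) Finset.univ.val
        = Multiset.map (fun r => X - C r) (Multiset.map a Finset.univ.val) by
      rw [Multiset.map_map]; rfl]
    
    exact roots_multiset_prod_X_sub_C _
  have := congrArg Polynomial.roots h3
  rw [hroots, hroots] at this
  exact this

lemma sum_f_eig {M P : Matrix n n ℝ} (hM : M.IsHermitian) (d : n → ℝ)
    (hP : IsUnit P.det) (h : M * P = P * Matrix.diagonal d) (f : ℝ → ℝ) :
    ∑ i, f (hM.eigenvalues i) = ∑ i, f (d i) := by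
  have := congrArg (fun s => (Multiset.map f s).sum) (eig_multiset_eq hM d hP h)
  simp only [Multiset.map_map, Function.comp] at this
  exact this

end general

section graphs
variable {V : Type*} [Fintype V] [DecidableEq V] (G : SimpleGraph V) [DecidableRel G.Adj]

lemma card_components_one (hG : G.Connected) : Fintype.card G.ConnectedComponent = 1 := by
  obtain ⟨v₀⟩ := hG.nonempty
  rw [Fintype.card_eq_one_iff]
  refine ⟨G.connectedComponentMk v₀, ?_⟩
  intro c
  induction c using SimpleGraph.ConnectedComponent.ind with
  | _ v => exact SimpleGraph.ConnectedComponent.sound (hG.preconnected v v₀)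

lemma lapEigsUnordered_nonneg (v : V) : 0 ≤ lapEigsUnordered G v :=
  (SimpleGraph.posSemidef_lapMatrix (R := ℝ) (G := G)).eigenvalues_nonneg v

lemma card_zero_eigs (hG : G.Connected) :
    (Finset.univ.filter fun v => lapEigsUnordered G v = 0).card = 1 := by
  classical
  set hH := (SimpleGraph.posSemidef_lapMatrix (R := ℝ) (G := G)).1 with hHdef
  have hrank : (G.lapMatrix ℝ).rank = (Finset.univ.filter fun v => ¬ lapEigsUnordered G v = 0).card := by
    rw [hH.rank_eq_card_non_zero_eigs, Fintype.card_subtype]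
    rfl
  have hker : Module.finrank ℝ (LinearMap.ker ((G.lapMatrix ℝ).mulVecLin)) = 1 := by
    have h1 : Matrix.toLin' (G.lapMatrix ℝ) = (G.lapMatrix ℝ).mulVecLin :=
      LinearMap.ext fun x => by rw [Matrix.toLin'_apply]; rfl
    rw [← h1, ← SimpleGraph.card_connectedComponent_eq_finrank_ker_toLin'_lapMatrix,
      card_components_one G hG]
  have hrn : (G.lapMatrix ℝ).rank +
      Module.finrank ℝ (LinearMap.ker ((G.lapMatrix ℝ).mulVecLin)) = Fintype.card V := by
    rw [Matrix.rank]
    rw [LinearMap.finrank_range_add_finrank_ker]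
    simp [Module.finrank_pi]
  have hsplit := Finset.card_filter_add_card_filter_not
    (s := (Finset.univ : Finset V)) (p := fun v => lapEigsUnordered G v = 0)
  rw [Finset.card_univ] at hsplit
  omega

variable {G}

lemma seq_zero_iff (hG : G.Connected) {n : ℕ} {μ : Fin n → ℝ} (hμ : IsLapEigSeq G μ) :
    (∀ i : Fin n, 0 ≤ μ i) ∧ (∀ i : Fin n, (μ i = 0 ↔ i.val = 0)) := by
  obtain ⟨hmono, e, he⟩ := hμ
  have hnn : ∀ i : Fin n, 0 ≤ μ i := fun i => by
    have := lapEigsUnordered_nonneg G (e.symm i)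
    rwa [he, e.apply_symm_apply] at this
  have hcard : (Finset.univ.filter fun i : Fin n => μ i = 0).card = 1 := by
    rw [← card_zero_eigs G hG]
    apply Finset.card_bij (fun v _ => e.symm v)
    · intro v hv; simp only [Finset.mem_filter, Finset.mem_univ, true_and] at hv ⊢
      rw [he (e.symm v), e.apply_symm_apply]
      exact hv
    · intro a ha b hb hab; exact e.symm.injective hab
    · intro v hv
      simp only [Finset.mem_filter, Finset.mem_univ, true_and] at hv ⊢
      exact ⟨e v, by rw [← he v]; exact hv, by simp⟩
  obtain ⟨i₀, hi₀⟩ : ∃ i₀ : Fin n, μ i₀ = 0 := by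
    obtain ⟨i₀, hi₀⟩ := Finset.card_pos.mp (by rw [hcard]; norm_num)
    exact ⟨i₀, (Finset.mem_filter.mp hi₀).2⟩
  have hn : 0 < n := i₀.pos
  have hz : μ ⟨0, hn⟩ = 0 := by
    have h1 : μ ⟨0, hn⟩ ≤ μ i₀ := hmono (by simp [Fin.le_def])
    have h2 := hnn ⟨0, hn⟩
    rw [hi₀] at h1
    linarith
  refine ⟨hnn, fun i => ⟨?_, ?_⟩⟩
  · intro hi
    have hsub := Finset.card_le_one.mp (le_of_eq hcard)
    have := hsub i (by simp [hi]) ⟨0, hn⟩ (by simp [hz])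
    simpa using congrArg Fin.val this
  · intro hi
    have : i = ⟨0, hn⟩ := by ext; simpa using hi
    rw [this]; exact hz

lemma seq_sum (hG : G.Connected) {n : ℕ} {μ : Fin n → ℝ} (hμ : IsLapEigSeq G μ)
    (f : ℝ → ℝ) (hf : f 0 = 0) :
    ∑ v, f (lapEigsUnordered G v) =
      ∑ i ∈ Finset.univ.filter (fun i : Fin n => 0 < i.val), f (μ i) := by
  obtain ⟨hmono, e, he⟩ := hμ
  have h1 : ∑ v, f (lapEigsUnordered G v) = ∑ i : Fin n, f (μ i) := by
    rw [← Equiv.sum_comp e (fun i => f (μ i))]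
    exact Finset.sum_congr rfl fun v _ => by rw [he v]
  rw [h1, ← Finset.sum_filter_add_sum_filter_not Finset.univ (fun i : Fin n => 0 < i.val)]
  have h2 : ∑ i ∈ Finset.univ.filter (fun i : Fin n => ¬ 0 < i.val), f (μ i) = 0 := by
    apply Finset.sum_eq_zero
    intro i hi
    simp only [Finset.mem_filter, Finset.mem_univ, true_and, not_lt, Nat.le_zero] at hi
    have := ((seq_zero_iff hG ⟨hmono, e, he⟩).2 i).mpr hi
    rw [this, hf]
  rw [h2, add_zero]

lemma seq_sum_ne (hG : G.Connected) {n : ℕ} {μ : Fin n → ℝ} (hμ : IsLapEigSeq G μ)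
    (F : ℝ → ℝ) :
    ∑ v ∈ Finset.univ.filter (fun v => lapEigsUnordered G v ≠ 0), F (lapEigsUnordered G v) =
      ∑ i ∈ Finset.univ.filter (fun i : Fin n => 0 < i.val), F (μ i) := by
  obtain ⟨hmono, e, he⟩ := hμ
  have hiff := (seq_zero_iff hG ⟨hmono, e, he⟩).2
  apply Finset.sum_bij (fun v _ => e v)
  · intro v hv
    simp only [Finset.mem_filter, Finset.mem_univ, true_and] at hv ⊢
    have h0 : ¬ μ (e v) = 0 := by rwa [← he v]
    exact Nat.pos_of_ne_zero fun h => h0 ((hiff (e v)).mpr h)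
  · intro a _ b _ hab
    exact e.injective hab
  · intro i hi
    simp only [Finset.mem_filter, Finset.mem_univ, true_and] at hi ⊢
    refine ⟨e.symm i, ?_, by simp⟩
    rw [he (e.symm i), e.apply_symm_apply]
    intro h0
    have := (hiff i).mp h0
    omega
  · intro v _
    rw [he v]

end graphs

section lex
variable {α β : Type*} (G₁ : SimpleGraph α) (G₂ : SimpleGraph β)

lemma lexProd_adj (a b : α × β) :
    (lexProd G₁ G₂).Adj a b ↔ G₁.Adj a.1 b.1 ∨ (a.1 = b.1 ∧ G₂.Adj a.2 b.2) := by
  rw [lexProd, SimpleGraph.fromRel_adj]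
  constructor
  · rintro ⟨-, (h | ⟨h1, h2⟩) | (h | ⟨h1, h2⟩)⟩
    · exact Or.inl h
    · exact Or.inr ⟨h1, h2⟩
    · exact Or.inl h.symm
    · exact Or.inr ⟨h1.symm, h2.symm⟩
  · rintro (h | ⟨h1, h2⟩)
    · exact ⟨fun he => h.ne (congrArg Prod.fst he), Or.inl (Or.inl h)⟩
    · exact ⟨fun he => h2.ne (congrArg Prod.snd he), Or.inl (Or.inr ⟨h1, h2⟩)⟩

lemma lexProd_connected (h₁ : G₁.Connected) (h₂ : G₂.Connected) :
    (lexProd G₁ G₂).Connected := by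
  have hne : Nonempty (α × β) := ⟨(h₁.nonempty.some, h₂.nonempty.some)⟩
  rw [SimpleGraph.connected_iff]
  refine ⟨fun p q => ?_, hne⟩
  obtain ⟨u, v⟩ := p
  obtain ⟨u', v'⟩ := q
  refine SimpleGraph.Reachable.trans
    (SimpleGraph.Reachable.map
      ⟨fun x => (u, x), fun h => (lexProd_adj G₁ G₂ _ _).mpr (Or.inr ⟨rfl, h⟩)⟩
      (h₂.preconnected v v'))
    (SimpleGraph.Reachable.map
      ⟨fun x => (x, v'), fun h => (lexProd_adj G₁ G₂ _ _).mpr (Or.inl h)⟩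
      (h₁.preconnected u u'))

variable [Fintype α] [DecidableEq α] [Fintype β] [DecidableEq β]
variable [DecidableRel G₁.Adj] [DecidableRel G₂.Adj]

lemma lexProd_degree (u : α) (v : β) :
    (lexProd G₁ G₂).degree (u, v) = G₁.degree u * Fintype.card β + G₂.degree v := by
  classical
  rw [SimpleGraph.degree, SimpleGraph.neighborFinset_eq_filter, Finset.card_filter,
    Fintype.sum_prod_type]
  have hrow : ∀ u' : α, (∑ v' : β, if (lexProd G₁ G₂).Adj (u, v) (u', v') then 1 else 0)
      = (if G₁.Adj u u' then Fintype.card β else 0) + (if u = u' then G₂.degree v else 0) := by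
    intro u'
    by_cases h1 : G₁.Adj u u'
    · rw [if_pos h1, if_neg (G₁.ne_of_adj h1), add_zero,
        Finset.sum_congr rfl (fun v' _ => if_pos ((lexProd_adj G₁ G₂ _ _).mpr (Or.inl h1)))]
      simp
    · rw [if_neg h1, zero_add]
      by_cases h2 : u = u'
      · subst h2
        have hcond : ∀ v' : β, ((lexProd G₁ G₂).Adj (u, v) (u, v') ↔ G₂.Adj v v') := by
          intro v'
          rw [lexProd_adj]
          simp [h1]
        rw [if_pos rfl,
          Finset.sum_congr rfl (fun v' _ => if_congr (hcond v') rfl rfl),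
          SimpleGraph.degree, SimpleGraph.neighborFinset_eq_filter, Finset.card_filter]
      · rw [if_neg h2,
          Finset.sum_congr rfl (fun v' _ => if_neg (fun hadj => by
            rcases (lexProd_adj G₁ G₂ _ _).mp hadj with h | h
            · exact h1 h
            · exact h2 h.1))]
        simp
  rw [Finset.sum_congr rfl (fun u' _ => hrow u'), Finset.sum_add_distrib]
  congr 1
  · have h3 : ∀ u' : α, (if G₁.Adj u u' then Fintype.card β else 0)
        = (if G₁.Adj u u' then 1 else 0) * Fintype.card β := by
      intro u'; split <;> simp
    rw [Finset.sum_congr rfl (fun u' _ => h3 u'), ← Finset.sum_mul, ← Finset.card_filter,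
      SimpleGraph.degree, SimpleGraph.neighborFinset_eq_filter]
  · simp

lemma lex_lap_eq :
    (lexProd G₁ G₂).lapMatrix ℝ =
      (Fintype.card β : ℝ) • ((Matrix.diagonal fun u => (G₁.degree u : ℝ)) ⊗ₖ (1 : Matrix β β ℝ))
        + (1 : Matrix α α ℝ) ⊗ₖ (G₂.lapMatrix ℝ)
        - (G₁.adjMatrix ℝ) ⊗ₖ (Matrix.of fun _ _ => (1 : ℝ)) := by
  ext p q
  obtain ⟨u, v⟩ := p
  obtain ⟨u', v'⟩ := q
  simp only [SimpleGraph.lapMatrix, Matrix.sub_apply, Matrix.add_apply, Matrix.smul_apply,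
    Matrix.kronecker_apply, SimpleGraph.degMatrix, Matrix.diagonal_apply,
    SimpleGraph.adjMatrix_apply, Matrix.one_apply, Matrix.of_apply, smul_eq_mul]
  by_cases h1 : u = u'
  · subst h1
    by_cases h2 : v = v'
    · subst h2
      have hadj : ¬ (lexProd G₁ G₂).Adj (u, v) (u, v) := SimpleGraph.irrefl _
      simp only [if_pos rfl, if_neg hadj, lexProd_degree]
      simp only [SimpleGraph.irrefl, if_false, if_true]
      push_cast
      ring
    · have hpq : ¬ ((u, v) = (u, v')) := fun h => h2 (congrArg Prod.snd h)
      have hadj : (lexProd G₁ G₂).Adj (u, v) (u, v') ↔ G₂.Adj v v' := by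
        rw [lexProd_adj]; simp [G₁.irrefl]
      rw [if_congr hadj rfl rfl]
      simp [if_neg hpq, if_neg h2]
  · have hpq : ¬ ((u, v) = (u', v')) := fun h => h1 (congrArg Prod.fst h)
    have hadj : (lexProd G₁ G₂).Adj (u, v) (u', v') ↔ G₁.Adj u u' := by
      rw [lexProd_adj]; simp [h1]
    rw [if_congr hadj rfl rfl]
    simp only [if_neg hpq, if_neg h1]
    ring

end lex

section core
variable {α β : Type*} [Fintype α] [DecidableEq α] [Fintype β] [DecidableEq β]
variable (G₁ : SimpleGraph α) [DecidableRel G₁.Adj] (G₂ : SimpleGraph β) [DecidableRel G₂.Adj]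

lemma key_sum (h₁ : G₁.Connected) (h₂ : G₂.Connected) (f : ℝ → ℝ) :
    ∑ p : α × β, f (lapEigsUnordered (lexProd G₁ G₂) p) =
      (∑ i : α, f ((Fintype.card β : ℝ) * lapEigsUnordered G₁ i)) +
        ∑ j ∈ Finset.univ.filter (fun j : β => lapEigsUnordered G₂ j ≠ 0), ∑ i : α,
          f (lapEigsUnordered G₂ j + (Fintype.card β : ℝ) * (G₁.degree i)) := by
  classical
  set n₂ℝ : ℝ := (Fintype.card β : ℝ) with hn₂
  set hL₁ : (G₁.lapMatrix ℝ).IsHermitian := (SimpleGraph.posSemidef_lapMatrix (R := ℝ) (G := G₁)).1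
  set hL₂ : (G₂.lapMatrix ℝ).IsHermitian := (SimpleGraph.posSemidef_lapMatrix (R := ℝ) (G := G₂)).1
  set U₁ : Matrix α α ℝ := (hL₁.eigenvectorUnitary : Matrix α α ℝ) with hU₁def
  set U₂ : Matrix β β ℝ := (hL₂.eigenvectorUnitary : Matrix β β ℝ) with hU₂def
  have heig₁ : lapEigsUnordered G₁ = hL₁.eigenvalues := rfl
  have heig₂ : lapEigsUnordered G₂ = hL₂.eigenvalues := rfl
  have hU₁ : G₁.lapMatrix ℝ * U₁ = U₁ * Matrix.diagonal hL₁.eigenvalues := herm_mul_eigUnitary hL₁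
  have hU₂ : G₂.lapMatrix ℝ * U₂ = U₂ * Matrix.diagonal hL₂.eigenvalues := herm_mul_eigUnitary hL₂
  have hU₂o : U₂ᵀ * U₂ = 1 := by
    have h := Matrix.mem_unitaryGroup_iff'.mp hL₂.eigenvectorUnitary.2
    rwa [Matrix.star_eq_conjTranspose, Matrix.conjTranspose_eq_transpose_of_trivial] at h
  have hU₁o : U₁ᵀ * U₁ = 1 := by
    have h := Matrix.mem_unitaryGroup_iff'.mp hL₁.eigenvectorUnitary.2
    rwa [Matrix.star_eq_conjTranspose, Matrix.conjTranspose_eq_transpose_of_trivial] at h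
  -- the distinguished zero-eigenvalue index of G₂
  obtain ⟨j₂, hj₂set⟩ := Finset.card_eq_one.mp (card_zero_eigs G₂ h₂)
  have hj₂iff : ∀ j : β, hL₂.eigenvalues j = 0 ↔ j = j₂ := by
    intro j
    rw [← heig₂]
    constructor
    · intro h
      have : j ∈ Finset.univ.filter fun v => lapEigsUnordered G₂ v = 0 := by simp [h]
      rwa [hj₂set, Finset.mem_singleton] at this
    · intro h
      have hmem : j₂ ∈ Finset.univ.filter (fun v => lapEigsUnordered G₂ v = 0) := by
        rw [hj₂set]; exact Finset.mem_singleton_self j₂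
      rw [Finset.mem_filter] at hmem
      rw [h]
      exact hmem.2
  have hj₂ : hL₂.eigenvalues j₂ = 0 := (hj₂iff j₂).mpr rfl
  -- the constant eigenvector
  set w : β → ℝ := fun v => U₂ v j₂ with hwdef
  have hw0 : ∀ v : β, ∑ v', G₂.lapMatrix ℝ v v' * w v' = 0 := by
    intro v
    have := congrFun (congrFun hU₂ v) j₂
    rw [Matrix.mul_apply, Matrix.mul_diagonal] at this
    simpa [hj₂] using this
  have hwconst : ∀ x y : β, w x = w y := by
    have hz : Matrix.toLin' (G₂.lapMatrix ℝ) w = 0 := by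
      rw [Matrix.toLin'_apply]
      ext v
      simpa [Matrix.mulVec, dotProduct] using hw0 v
    exact fun x y =>
      (SimpleGraph.lapMatrix_mulVec_eq_zero_iff_forall_reachable (G := G₂)).mp
          (by rwa [Matrix.toLin'_apply] at hz) x y
        (h₂.preconnected x y)
  have hβne : Nonempty β := h₂.nonempty
  obtain ⟨v₀⟩ := hβne
  have hw1 : ∑ v : β, w v * w v = 1 := by
    have := congrFun (congrFun hU₂o j₂) j₂
    rw [Matrix.mul_apply] at this
    simpa [Matrix.transpose_apply, Matrix.one_apply] using this
  have hwv₀ : w v₀ ≠ 0 := by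
    intro h0
    have : ∀ v : β, w v = 0 := fun v => (hwconst v v₀).trans h0
    rw [Finset.sum_congr rfl (fun v _ => by rw [this v, mul_zero])] at hw1
    simpa using hw1
  have hworth : ∀ j : β, j ≠ j₂ → ∑ v : β, w v * U₂ v j = 0 := by
    intro j hj
    have := congrFun (congrFun hU₂o j₂) j
    rw [Matrix.mul_apply] at this
    simpa [Matrix.transpose_apply, Matrix.one_apply, (Ne.symm hj)] using this
  have hcolsum : ∀ j : β, j ≠ j₂ → ∑ v : β, U₂ v j = 0 := by
    intro j hj
    have h := hworth j hj
    rw [Finset.sum_congr rfl (fun v _ => by rw [hwconst v v₀])] at h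
    rw [← Finset.mul_sum] at h
    exact (mul_eq_zero.mp h).resolve_left hwv₀
  have hwsum : ∀ x : β, ∑ v : β, w v = n₂ℝ * w x := by
    intro x
    rw [Finset.sum_congr rfl (fun v _ => hwconst v x), Finset.sum_const, Finset.card_univ,
      nsmul_eq_mul, hn₂]
  -- the building blocks
  set W : Matrix β β ℝ := Matrix.of fun v j => if j = j₂ then w v else 0 with hWdef
  set Z : Matrix β β ℝ := Matrix.of fun v j => if j = j₂ then 0 else U₂ v j with hZdef
  set S : Matrix β β ℝ := Matrix.diagonal (fun j => if j = j₂ then (1 : ℝ) else 0) with hSdef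
  set Jm : Matrix β β ℝ := Matrix.of fun _ _ => (1 : ℝ) with hJdef
  set d₁ : α → ℝ := fun i => (G₁.degree i : ℝ) with hd₁def
  set β₂' : β → ℝ := fun j => if j = j₂ then 0 else hL₂.eigenvalues j with hβ₂'def
  have hLW : G₂.lapMatrix ℝ * W = 0 := by
    ext v j
    rw [Matrix.mul_apply, Matrix.zero_apply, hWdef]
    simp only [Matrix.of_apply]
    by_cases hj : j = j₂
    · simp only [hj, if_true]
      exact hw0 v
    · simp [hj]
  have hJW : Jm * W = n₂ℝ • W := by
    ext v j
    rw [Matrix.mul_apply, Matrix.smul_apply, hJdef, hWdef]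
    simp only [Matrix.of_apply, one_mul, smul_eq_mul]
    by_cases hj : j = j₂
    · simp only [hj, if_true]
      exact hwsum v
    · simp [hj]
  have hJZ : Jm * Z = 0 := by
    ext v j
    rw [Matrix.mul_apply, Matrix.zero_apply, hJdef, hZdef]
    simp only [Matrix.of_apply, one_mul]
    by_cases hj : j = j₂
    · simp [hj]
    · simp only [hj, if_false]
      exact hcolsum j hj
  have hLZ : G₂.lapMatrix ℝ * Z = Z * Matrix.diagonal hL₂.eigenvalues := by
    ext v j
    rw [Matrix.mul_apply, Matrix.mul_diagonal, hZdef]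
    simp only [Matrix.of_apply]
    by_cases hj : j = j₂
    · simp [hj]
    · simp only [hj, if_false]
      have h := congrFun (congrFun hU₂ v) j
      rw [Matrix.mul_apply, Matrix.mul_diagonal] at h
      exact h
  have hWS : W * S = W := by
    ext v j
    rw [hSdef, Matrix.mul_diagonal, hWdef]
    by_cases hj : j = j₂ <;> simp [hj]
  have hZS : Z * S = 0 := by
    ext v j
    rw [hSdef, Matrix.mul_diagonal, hZdef]
    by_cases hj : j = j₂ <;> simp [hj]
  have hWb : W * Matrix.diagonal β₂' = 0 := by
    ext v j
    rw [Matrix.mul_diagonal, hWdef, hβ₂'def]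
    by_cases hj : j = j₂ <;> simp [hj]
  have hZb : Z * Matrix.diagonal β₂' = Z * Matrix.diagonal hL₂.eigenvalues := by
    ext v j
    rw [Matrix.mul_diagonal, Matrix.mul_diagonal, hZdef, hβ₂'def]
    by_cases hj : j = j₂ <;> simp [hj]
  have hWtW : Wᵀ * W = S := by
    ext j j'
    rw [Matrix.mul_apply, hSdef, Matrix.diagonal_apply, hWdef]
    simp only [Matrix.transpose_apply, Matrix.of_apply]
    by_cases hj : j = j₂ <;> by_cases hj' : j' = j₂
    · simp only [if_pos hj, if_pos hj']
      rw [if_pos (hj.trans hj'.symm)]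
      exact hw1
    · simp only [if_pos hj, if_neg hj']
      rw [if_neg (show ¬ j = j' from fun h => hj' (h ▸ hj))]
      simp
    · simp only [if_neg hj, if_pos hj']
      rw [if_neg (show ¬ j = j' from fun h => hj (h.trans hj'))]
      simp
    · simp only [if_neg hj]
      by_cases hjj : j = j' <;> simp [hjj, hj]
  have hWtZ : Wᵀ * Z = 0 := by
    ext j j'
    rw [Matrix.mul_apply, Matrix.zero_apply, hWdef, hZdef]
    simp only [Matrix.transpose_apply, Matrix.of_apply]
    by_cases hj : j = j₂ <;> by_cases hj' : j' = j₂
    · simp only [if_pos hj, if_pos hj']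
      simp
    · simp only [if_pos hj, if_neg hj']
      exact hworth j' hj'
    · simp only [if_neg hj]
      simp
    · simp only [if_neg hj]
      simp
  have hZtW : Zᵀ * W = 0 := by
    ext j j'
    rw [Matrix.mul_apply, Matrix.zero_apply, hWdef, hZdef]
    simp only [Matrix.transpose_apply, Matrix.of_apply]
    by_cases hj : j = j₂ <;> by_cases hj' : j' = j₂
    · simp only [if_pos hj]
      simp
    · simp only [if_pos hj]
      simp
    · simp only [if_neg hj, if_pos hj']
      rw [Finset.sum_congr rfl (fun v _ => mul_comm (U₂ v j) (w v))]
      exact hworth j hj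
    · simp only [if_neg hj, if_neg hj']
      simp
  have hZtZ : Zᵀ * Z = 1 - S := by
    ext j j'
    rw [Matrix.mul_apply, Matrix.sub_apply, hSdef, Matrix.diagonal_apply, Matrix.one_apply, hZdef]
    simp only [Matrix.transpose_apply, Matrix.of_apply]
    by_cases hj : j = j₂ <;> by_cases hj' : j' = j₂
    · simp only [if_pos hj, if_pos hj']
      simp [hj.trans hj'.symm]
    · simp only [if_pos hj, if_neg hj']
      simp [show ¬ j = j' from fun h => hj' (h ▸ hj)]
    · simp only [if_neg hj, if_pos hj']
      simp [show ¬ j = j' from fun h => hj (h.trans hj')]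
    · simp only [if_neg hj, if_neg hj']
      have h := congrFun (congrFun hU₂o j) j'
      rw [Matrix.mul_apply] at h
      simp only [Matrix.transpose_apply] at h
      rw [h, Matrix.one_apply]
      simp
  have hW1S : W * (1 - S) = 0 := by rw [mul_sub, mul_one, hWS, sub_self]
  have hZ1S : Z * (1 - S) = Z := by rw [mul_sub, mul_one, hZS, sub_zero]
  set P : Matrix (α × β) (α × β) ℝ := U₁ ⊗ₖ W + (1 : Matrix α α ℝ) ⊗ₖ Z with hPdef
  set Dfun : α × β → ℝ := fun p => if p.2 = j₂ then n₂ℝ * hL₁.eigenvalues p.1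
    else hL₂.eigenvalues p.2 + n₂ℝ * d₁ p.1 with hDdef
  have hPtP : Pᵀ * P = 1 := by
    rw [hPdef, Matrix.transpose_add, ← Matrix.kroneckerMap_transpose,
      ← Matrix.kroneckerMap_transpose, Matrix.transpose_one]
    simp only [add_mul, mul_add, ← Matrix.mul_kronecker_mul, one_mul, mul_one, hU₁o, hWtW,
      hWtZ, hZtW, hZtZ, Matrix.kronecker_zero, add_zero, zero_add]
    rw [← Matrix.kronecker_add, show S + (1 - S) = (1 : Matrix β β ℝ) by abel,
      Matrix.one_kronecker_one]
  have hdet : IsUnit P.det := Matrix.isUnit_det_of_left_inverse hPtP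
  have hDdiag : Matrix.diagonal Dfun =
      n₂ℝ • (Matrix.diagonal hL₁.eigenvalues ⊗ₖ S) + n₂ℝ • (Matrix.diagonal d₁ ⊗ₖ (1 - S))
        + (1 : Matrix α α ℝ) ⊗ₖ Matrix.diagonal β₂' := by
    ext p q
    obtain ⟨i, j⟩ := p
    obtain ⟨i', j'⟩ := q
    simp only [hDdef, hSdef, hβ₂'def, Matrix.diagonal_apply, Matrix.add_apply, Matrix.smul_apply,
      Matrix.kronecker_apply, Matrix.sub_apply, Matrix.one_apply, smul_eq_mul, Prod.mk.injEq]
    by_cases hii : i = i' <;> by_cases hjj : j = j'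
    · subst hii; subst hjj
      simp only [and_self, if_pos rfl]
      by_cases hj : j = j₂ <;> simp [hj] <;> ring
    · simp only [hii, hjj, and_false, if_false]
      simp [hjj]
    · simp only [hii, hjj, false_and, if_false]
      simp [hii]
    · simp only [hii, hjj, false_and, if_false]
      simp [hii]
  have hDU : Matrix.diagonal d₁ * U₁ =
      U₁ * Matrix.diagonal hL₁.eigenvalues + G₁.adjMatrix ℝ * U₁ := by
    apply eq_add_of_sub_eq
    rw [← sub_mul]
    exact hU₁
  have hPD : (lexProd G₁ G₂).lapMatrix ℝ * P = P * Matrix.diagonal Dfun := by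
    rw [lex_lap_eq G₁ G₂, hPdef, hDdiag, ← hJdef, ← hd₁def]
    simp only [sub_mul, add_mul, mul_add, smul_mul_assoc, mul_smul_comm,
      ← Matrix.mul_kronecker_mul, one_mul, mul_one, hLW, hLZ, hJW, hJZ, hWS, hZS, hW1S, hZ1S,
      hWb, hZb, hDU, Matrix.kronecker_zero, Matrix.zero_kronecker, Matrix.kronecker_smul,
      Matrix.add_kronecker, smul_add, smul_zero, add_zero, zero_add]
    rw [← hn₂]
    abel
  -- transfer of sums
  set hM : ((lexProd G₁ G₂).lapMatrix ℝ).IsHermitian :=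
    (SimpleGraph.posSemidef_lapMatrix (R := ℝ) (G := lexProd G₁ G₂)).1 with hMdef
  have hmain : ∑ p : α × β, f (lapEigsUnordered (lexProd G₁ G₂) p) = ∑ p : α × β, f (Dfun p) :=
    sum_f_eig hM Dfun hdet hPD f
  rw [hmain, Fintype.sum_prod_type, Finset.sum_comm]
  rw [← Finset.sum_erase_add _ _ (Finset.mem_univ j₂)]
  have h1 : ∑ i : α, f (Dfun (i, j₂)) = ∑ i : α, f (n₂ℝ * lapEigsUnordered G₁ i) := by
    apply Finset.sum_congr rfl
    intro i _
    rw [hDdef, heig₁]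
    simp
  have h2 : Finset.univ.erase j₂ = Finset.univ.filter (fun j : β => lapEigsUnordered G₂ j ≠ 0) := by
    ext j
    simp only [Finset.mem_erase, Finset.mem_univ, and_true, Finset.mem_filter, true_and]
    rw [heig₂]
    exact (not_congr (hj₂iff j)).symm
  have h3 : ∀ j ∈ Finset.univ.erase j₂, ∑ i : α, f (Dfun (i, j)) =
      ∑ i : α, f (lapEigsUnordered G₂ j + n₂ℝ * (G₁.degree i)) := by
    intro j hj
    have hjne : j ≠ j₂ := (Finset.mem_erase.mp hj).1
    apply Finset.sum_congr rfl
    intro i _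
    rw [hDdef, heig₂, hd₁def]
    simp [hjne]
  rw [h1, Finset.sum_congr rfl h3, h2, add_comm]

end core

theorem statement_19 {n₁ n₂ : ℕ}
    (G₁ : SimpleGraph (Fin n₁)) [DecidableRel G₁.Adj] (hG₁ : G₁.Connected)
    (G₂ : SimpleGraph (Fin n₂)) [DecidableRel G₂.Adj] (hG₂ : G₂.Connected)
    (μ₁ : Fin n₁ → ℝ) (hμ₁ : IsLapEigSeq G₁ μ₁)
    (μ₂ : Fin n₂ → ℝ) (hμ₂ : IsLapEigSeq G₂ μ₂)
    (ν : Fin (n₁ * n₂) → ℝ) (hν : IsLapEigSeq (lexProd G₁ G₂) ν) :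
    ((n₁ : ℝ) * n₂) * ∑ l ∈ univ.filter (fun l : Fin (n₁ * n₂) => 0 < l.val), 1 / ν l ^ 2 =
      ((n₁ : ℝ) * n₂) *
        ((∑ i ∈ univ.filter (fun i : Fin n₁ => 0 < i.val), 1 / ((n₂ : ℝ) ^ 2 * μ₁ i ^ 2)) +
          ∑ j ∈ univ.filter (fun j : Fin n₂ => 0 < j.val),
            ∑ i : Fin n₁, 1 / (μ₂ j + (G₁.degree i : ℝ) * n₂) ^ 2) := by
  classical
  congr 1
  have hconn : (lexProd G₁ G₂).Connected := lexProd_connected G₁ G₂ hG₁ hG₂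
  set g : ℝ → ℝ := fun x => if x = 0 then 0 else 1 / x ^ 2 with hgdef
  have hg0 : g 0 = 0 := by simp [hgdef]
  have hzν := (seq_zero_iff hconn hν).2
  have hnnν := (seq_zero_iff hconn hν).1
  have hz₁ := (seq_zero_iff hG₁ hμ₁).2
  have hnn₁ := (seq_zero_iff hG₁ hμ₁).1
  have hz₂ := (seq_zero_iff hG₂ hμ₂).2
  have hnn₂ := (seq_zero_iff hG₂ hμ₂).1
  have hLHS : ∑ l ∈ univ.filter (fun l : Fin (n₁ * n₂) => 0 < l.val), 1 / ν l ^ 2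
      = ∑ p : Fin n₁ × Fin n₂, g (lapEigsUnordered (lexProd G₁ G₂) p) := by
    rw [seq_sum hconn hν g hg0]
    apply Finset.sum_congr rfl
    intro l hl
    rw [Finset.mem_filter] at hl
    have hne : ¬ ν l = 0 := fun h0 => by have := (hzν l).mp h0; omega
    rw [hgdef]
    simp [hne]
  rw [hLHS, key_sum G₁ G₂ hG₁ hG₂ g]
  simp only [Fintype.card_fin]
  congr 1
  · -- first sum
    have hf : (fun x => g ((n₂ : ℝ) * x)) 0 = 0 := by simp [hgdef]
    refine (seq_sum hG₁ hμ₁ (fun x => g ((n₂ : ℝ) * x)) hf).trans ?_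
    apply Finset.sum_congr rfl
    intro i hi
    rw [Finset.mem_filter] at hi
    have hne : ¬ μ₁ i = 0 := fun h0 => by have := (hz₁ i).mp h0; omega
    have hn₂pos : 0 < n₂ := Fin.pos (hG₂.nonempty.some)
    have hmul : (n₂ : ℝ) * μ₁ i ≠ 0 := by
      apply mul_ne_zero _ hne
      exact_mod_cast hn₂pos.ne'
    rw [hgdef]
    simp only [if_neg hmul]
    rw [mul_pow]
  · -- second sum
    refine (seq_sum_ne hG₂ hμ₂
      (fun t => ∑ i : Fin n₁, g (t + (n₂ : ℝ) * (G₁.degree i)))).trans ?_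
    apply Finset.sum_congr rfl
    intro j hj
    rw [Finset.mem_filter] at hj
    apply Finset.sum_congr rfl
    intro i _
    have hne : ¬ μ₂ j = 0 := fun h0 => by have := (hz₂ j).mp h0; omega
    have hpos : 0 < μ₂ j := lt_of_le_of_ne (hnn₂ j) (Ne.symm hne)
    have hsum : μ₂ j + (n₂ : ℝ) * (G₁.degree i) ≠ 0 := by positivity
    rw [hgdef]
    simp only [if_neg hsum]
    rw [mul_comm ((n₂ : ℝ)) ((G₁.degree i : ℝ))]
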